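/- Robustness of magic upper bound for subset phase states: for any subset S ⊆ {0,1}^n with |S| ≥ 2 and any f: {0,1}^n → {0,1}, the pure state |ψ_{f,S}⟩ = |S|^{−1/2} Σ_{x∈S} (−1)^{f(x)}|x⟩ admits a decomposition ψ_{f,S} = Σ_i c_i σ_i into pure stabilizer states σ_i with Σ_i |c_i| ≤ |S|; hence the log-robustness satisfies ℛ(ψ_{f,S}) ≤ log|S|. -/

import Mathlib

open scoped BigOperators
open ComplexConjugate
open scoped ComplexOrder

noncomputable def traceNorm {ι : Type*} [Fintype ι] [DecidableEq ι] (A : Matrix ι ι ℂ) : ℝ :=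
  (((Matrix.posSemidef_conjTranspose_mul_self A).1.eigenvectorUnitary.1 *
      Matrix.diagonal (((↑) : ℝ → ℂ) ∘ (√·) ∘ (Matrix.posSemidef_conjTranspose_mul_self A).1.eigenvalues) *
      (star (Matrix.posSemidef_conjTranspose_mul_self A).1.eigenvectorUnitary :
        Matrix ι ι ℂ)).trace).re

noncomputable def proj {ι : Type*} (v : ι → ℂ) : Matrix ι ι ℂ :=
  Matrix.of fun i j => v i * conj (v j)

noncomputable def tensorPow {ι : Type*} (A : Matrix ι ι ℂ) (t : ℕ) :
    Matrix (Fin t → ι) (Fin t → ι) ℂ :=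
  Matrix.of fun x y => ∏ i, A (x i) (y i)

noncomputable def pauli {n : ℕ} (a b : Fin n → ZMod 2) :
    Matrix (Fin n → ZMod 2) (Fin n → ZMod 2) ℂ :=
  Matrix.of fun x y =>
    if x = y + a then
      Complex.I ^ (∑ i, (a i * b i).val) * (-1 : ℂ) ^ (∑ i, (b i * y i).val)
    else 0

noncomputable def xi {n : ℕ} (ρ : Matrix (Fin n → ZMod 2) (Fin n → ZMod 2) ℂ)
    (p : (Fin n → ZMod 2) × (Fin n → ZMod 2)) : ℝ :=
  Complex.normSq ((pauli p.1 p.2 * ρ).trace) / 2 ^ n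

/-- A unit vector represents a pure stabilizer state iff its stabilizer group
G_ψ = {P : tr(Pψ) = ±1} has the maximal size 2^n. -/
def IsStabVec {n : ℕ} (u : (Fin n → ZMod 2) → ℂ) : Prop :=
  {p : (Fin n → ZMod 2) × (Fin n → ZMod 2) |
      Complex.normSq ((pauli p.1 p.2 * proj u).trace) = 1}.ncard = 2 ^ n

/-- A matrix is a pure stabilizer state if it is the projector onto a stabilizer vector. -/
def IsStabState {n : ℕ} (ρ : Matrix (Fin n → ZMod 2) (Fin n → ZMod 2) ℂ) : Prop :=
  ∃ u : (Fin n → ZMod 2) → ℂ,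
    (∑ x, Complex.normSq (u x) = 1) ∧ ρ = proj u ∧ IsStabVec u

/-- Log-robustness of magic: log₂ of the least ℓ¹-norm of coefficients in a real
decomposition into pure stabilizer states. -/
noncomputable def logRob {n : ℕ}
    (ρ : Matrix (Fin n → ZMod 2) (Fin n → ZMod 2) ℂ) : ℝ :=
  Real.logb 2 (sInf {t : ℝ | ∃ (m : ℕ) (c : Fin m → ℝ)
    (σ : Fin m → Matrix (Fin n → ZMod 2) (Fin n → ZMod 2) ℂ),
      (∀ i, IsStabState (σ i)) ∧ ρ = ∑ i, (c i : ℂ) • σ i ∧ t = ∑ i, |c i|})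

/-! ## Auxiliary lemmas -/

lemma neg_one_pow_mod_two (k : ℕ) : (-1 : ℂ) ^ k = (-1) ^ (k % 2) := by
  conv_lhs => rw [← Nat.div_add_mod k 2]
  rw [pow_add, pow_mul, neg_one_sq, one_pow, one_mul]

lemma neg_one_pow_sum_val {n : ℕ} (g : Fin n → ZMod 2) :
    (-1 : ℂ) ^ (∑ i, (g i).val) = (-1) ^ ((∑ i, g i).val) := by
  rw [neg_one_pow_mod_two, neg_one_pow_mod_two ((∑ i, g i).val)]
  congr 1
  have h : ((∑ i, (g i).val : ℕ) : ZMod 2) = ∑ i, g i := by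
    push_cast [ZMod.natCast_val, ZMod.cast_id]
    rfl
  rw [← h, ZMod.val_natCast]
  omega

lemma trace_pauli_proj {n : ℕ} (a b : Fin n → ZMod 2) (u : (Fin n → ZMod 2) → ℂ) :
    (pauli a b * proj u).trace =
      ∑ y, Complex.I ^ (∑ i, (a i * b i).val) * (-1 : ℂ) ^ (∑ i, (b i * y i).val)
        * (u y * conj (u (y + a))) := by
  rw [Matrix.trace]
  simp only [Matrix.diag, Matrix.mul_apply, pauli, proj, Matrix.of_apply]
  rw [Finset.sum_comm]
  refine Finset.sum_congr rfl fun y _ => ?_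
  rw [Finset.sum_eq_single (y + a)]
  · simp
  · intro x _ hx
    rw [if_neg hx, zero_mul]
  · simp

lemma ncard_fst_eq {A B : Type*} [Fintype A] [Fintype B] (a0 : A) :
    {p : A × B | p.1 = a0}.ncard = Fintype.card B := by
  rw [← Nat.card_coe_set_eq]
  have e : {p : A × B | p.1 = a0} ≃ B :=
    { toFun := fun p => p.1.2
      invFun := fun b => ⟨(a0, b), rfl⟩
      left_inv := fun p => by
        ext
        · exact p.2.symm
        · rfl
      right_inv := fun b => rfl }
  rw [Nat.card_congr e, Nat.card_eq_fintype_card]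

noncomputable def eVec {n : ℕ} (z : Fin n → ZMod 2) : (Fin n → ZMod 2) → ℂ :=
  fun x => if x = z then 1 else 0

lemma trace_pauli_eVec {n : ℕ} (a b z : Fin n → ZMod 2) :
    (pauli a b * proj (eVec z)).trace =
      if a = 0 then (-1 : ℂ) ^ (∑ i, (b i * z i).val) else 0 := by
  rw [trace_pauli_proj]
  rw [Finset.sum_eq_single z]
  · by_cases ha : a = 0
    · subst ha
      simp [eVec]
    · have hz : ¬ (z + a = z) := fun h => ha (by rwa [add_eq_left] at h)
      rw [if_neg ha]
      simp only [eVec, if_neg hz, if_pos rfl, map_zero, mul_zero, one_mul]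
  · intro y _ hy
    simp [eVec, if_neg hy]
  · simp

lemma isStabState_eVec {n : ℕ} (z : Fin n → ZMod 2) : IsStabState (proj (eVec z)) := by
  refine ⟨eVec z, ?_, rfl, ?_⟩
  · rw [Finset.sum_eq_single z]
    · simp [eVec]
    · intro y _ hy
      simp [eVec, if_neg hy]
    · simp
  · unfold IsStabVec
    have hset : {p : (Fin n → ZMod 2) × (Fin n → ZMod 2) |
        Complex.normSq ((pauli p.1 p.2 * proj (eVec z)).trace) = 1} = {p | p.1 = 0} := by
      ext ⟨a, b⟩
      simp only [Set.mem_setOf_eq, trace_pauli_eVec]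
      by_cases ha : a = 0
      · simp [ha, map_pow]
      · simp [ha]
    rw [hset, ncard_fst_eq]
    simp

lemma zmod2_ne_zero_iff : ∀ x : ZMod 2, ¬ x = 0 ↔ x = 1 := by decide

lemma card_ker {n : ℕ} (a0 : Fin n → ZMod 2) (ha : a0 ≠ 0) :
    2 * (Finset.univ.filter (fun b : Fin n → ZMod 2 => ∑ i, b i * a0 i = 0)).card = 2 ^ n := by
  obtain ⟨j, hj⟩ : ∃ j, a0 j ≠ 0 := by
    by_contra h
    push_neg at h
    exact ha (funext h)
  have hj1 : a0 j = 1 := (zmod2_ne_zero_iff _).mp hj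
  have hδ : ∑ i, (Pi.single j 1 : Fin n → ZMod 2) i * a0 i = 1 := by
    rw [Finset.sum_eq_single j]
    · simp [hj1]
    · intro i _ hi
      simp [Pi.single_apply, if_neg hi]
    · simp
  have hadd : ∀ b b' : Fin n → ZMod 2,
      ∑ i, (b + b') i * a0 i = (∑ i, b i * a0 i) + ∑ i, b' i * a0 i := by
    intro b b'
    simp [add_mul, Finset.sum_add_distrib]
  have h11 : (1 + 1 : ZMod 2) = 0 := by decide
  have hcard : (Finset.univ.filter (fun b : Fin n → ZMod 2 => ∑ i, b i * a0 i = 0)).card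
      = (Finset.univ.filter (fun b : Fin n → ZMod 2 => ∑ i, b i * a0 i = 1)).card := by
    apply Finset.card_nbij' (fun b => b + Pi.single j 1) (fun b => b + Pi.single j 1)
    · intro b hb
      simp only [Finset.mem_coe, Finset.mem_filter, Finset.mem_univ, true_and] at hb ⊢
      rw [hadd, hb, hδ, zero_add]
    · intro b hb
      simp only [Finset.mem_coe, Finset.mem_filter, Finset.mem_univ, true_and] at hb ⊢
      rw [hadd, hb, hδ]
      decide
    · intro b _
      simp [add_assoc, ← Pi.single_add, h11]
    · intro b _
      simp [add_assoc, ← Pi.single_add, h11]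
  have htot := Finset.card_filter_add_card_filter_not
    (s := (Finset.univ : Finset (Fin n → ZMod 2)))
    (p := fun b => ∑ i, b i * a0 i = 0)
  have hneg : Finset.univ.filter (fun b : Fin n → ZMod 2 => ¬ ∑ i, b i * a0 i = 0)
      = Finset.univ.filter (fun b : Fin n → ZMod 2 => ∑ i, b i * a0 i = 1) := by
    apply Finset.filter_congr
    intro b _
    simp [zmod2_ne_zero_iff]
  rw [hneg] at htot
  have huniv : (Finset.univ : Finset (Fin n → ZMod 2)).card = 2 ^ n := by simp
  rw [huniv, ← hcard] at htot
  rw [two_mul]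
  exact htot

lemma ncard_pairset {n : ℕ} (a0 : Fin n → ZMod 2) (ha : a0 ≠ 0) :
    {p : (Fin n → ZMod 2) × (Fin n → ZMod 2) |
      (p.1 = 0 ∨ p.1 = a0) ∧ ∑ i, p.2 i * a0 i = 0}.ncard = 2 ^ n := by
  classical
  have hset : {p : (Fin n → ZMod 2) × (Fin n → ZMod 2) |
      (p.1 = 0 ∨ p.1 = a0) ∧ ∑ i, p.2 i * a0 i = 0}
      = ↑(({0, a0} : Finset (Fin n → ZMod 2)) ×ˢ
          (Finset.univ.filter (fun b : Fin n → ZMod 2 => ∑ i, b i * a0 i = 0))) := by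
    ext p
    simp [Finset.mem_product, and_comm]
  rw [hset, Set.ncard_coe_finset, Finset.card_product]
  rw [Finset.card_insert_of_notMem (by simp [Ne.symm ha]), Finset.card_singleton]
  exact card_ker a0 ha

noncomputable def pmVec {n : ℕ} (z w : Fin n → ZMod 2) (ε : ℝ) : (Fin n → ZMod 2) → ℂ :=
  fun x => (if x = z then 1 else if x = w then (ε : ℂ) else 0) / (Real.sqrt 2 : ℂ)

section PM
variable {n : ℕ} (z w : Fin n → ZMod 2) (ε : ℝ)

lemma pmVec_z (hzw : z ≠ w) : pmVec z w ε z = 1 / (Real.sqrt 2 : ℂ) := by simp [pmVec]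
lemma pmVec_w (hzw : z ≠ w) : pmVec z w ε w = (ε : ℂ) / (Real.sqrt 2 : ℂ) := by
  simp [pmVec, if_neg (Ne.symm hzw)]
lemma pmVec_other {y : Fin n → ZMod 2} (h1 : y ≠ z) (h2 : y ≠ w) : pmVec z w ε y = 0 := by
  simp [pmVec, h1, h2]

lemma add_self_char2 (v : Fin n → ZMod 2) : v + v = 0 := by
  funext i
  have : ∀ x : ZMod 2, x + x = 0 := by decide
  exact this (v i)

lemma trace_pauli_pmVec (a b : Fin n → ZMod 2) (hzw : z ≠ w) (hε : ε = 1 ∨ ε = -1) :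
    (pauli a b * proj (pmVec z w ε)).trace =
      if a = 0 then
        ((-1 : ℂ) ^ (∑ i, (b i * z i).val) + (-1 : ℂ) ^ (∑ i, (b i * w i).val)) / 2
      else if a = z + w then
        Complex.I ^ (∑ i, (a i * b i).val) * (ε : ℂ) *
          (((-1 : ℂ) ^ (∑ i, (b i * z i).val) + (-1 : ℂ) ^ (∑ i, (b i * w i).val)) / 2)
      else 0 := by
  have hsq : (Real.sqrt 2 : ℂ) * (Real.sqrt 2 : ℂ) = 2 := by
    rw [← Complex.ofReal_mul, Real.mul_self_sqrt (by norm_num : (0:ℝ) ≤ 2)]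
    norm_num
  have hε2 : (ε : ℂ) * (ε : ℂ) = 1 := by
    rcases hε with h | h <;> subst h <;> norm_num
  have hs2 : (Real.sqrt 2 : ℂ) ≠ 0 := by
    simpa using (Real.sqrt_ne_zero' .mpr (by norm_num : (0:ℝ) < 2))
  rw [trace_pauli_proj]
  rw [← Finset.sum_subset (Finset.subset_univ ({z, w} : Finset (Fin n → ZMod 2)))
      (by
        intro y _ hy
        simp only [Finset.mem_insert, Finset.mem_singleton, not_or] at hy
        rw [pmVec_other z w ε hy.1 hy.2]
        ring)]
  rw [Finset.sum_pair hzw]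
  by_cases ha0 : a = 0
  · subst ha0
    rw [if_pos rfl]
    rw [add_zero, add_zero, pmVec_z z w ε hzw, pmVec_w z w ε hzw]
    have hc1 : conj ((1 : ℂ) / (Real.sqrt 2 : ℂ)) = 1 / (Real.sqrt 2 : ℂ) := by
      rw [map_div₀, map_one, Complex.conj_ofReal]
    have hc2 : conj ((ε : ℂ) / (Real.sqrt 2 : ℂ)) = (ε : ℂ) / (Real.sqrt 2 : ℂ) := by
      rw [map_div₀, Complex.conj_ofReal, Complex.conj_ofReal]
    rw [hc1, hc2]
    have hz0 : ∑ i, ((0 : Fin n → ZMod 2) i * b i).val = 0 := by simp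
    rw [hz0, pow_zero]
    have e1 : (1 : ℂ)/(Real.sqrt 2 : ℂ) * ((1:ℂ)/(Real.sqrt 2 : ℂ)) = 1/2 := by
      rw [div_mul_div_comm, one_mul, hsq]
    have e2 : (ε : ℂ)/(Real.sqrt 2 : ℂ) * ((ε:ℂ)/(Real.sqrt 2 : ℂ)) = 1/2 := by
      rw [div_mul_div_comm, hε2, hsq]
    rw [e1, e2]
    ring
  · rw [if_neg ha0]
    by_cases hazw : a = z + w
    · subst hazw
      rw [if_pos rfl]
      have h1 : z + (z + w) = w := by rw [← add_assoc, add_self_char2, zero_add]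
      have h2 : w + (z + w) = z := by
        rw [add_comm z w, ← add_assoc, add_self_char2, zero_add]
      rw [h1, h2, pmVec_z z w ε hzw, pmVec_w z w ε hzw]
      have hc1 : conj ((1 : ℂ) / (Real.sqrt 2 : ℂ)) = 1 / (Real.sqrt 2 : ℂ) := by
        rw [map_div₀, map_one, Complex.conj_ofReal]
      have hc2 : conj ((ε : ℂ) / (Real.sqrt 2 : ℂ)) = (ε : ℂ) / (Real.sqrt 2 : ℂ) := by
        rw [map_div₀, Complex.conj_ofReal, Complex.conj_ofReal]
      rw [hc1, hc2]
      have e3 : (1 : ℂ)/(Real.sqrt 2 : ℂ) * ((ε:ℂ)/(Real.sqrt 2 : ℂ)) = (ε:ℂ)/2 := by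
        rw [div_mul_div_comm, one_mul, hsq]
      have e4 : (ε : ℂ)/(Real.sqrt 2 : ℂ) * ((1:ℂ)/(Real.sqrt 2 : ℂ)) = (ε:ℂ)/2 := by
        rw [div_mul_div_comm, mul_one, hsq]
      rw [e3, e4]
      ring
    · rw [if_neg hazw]
      have hza : z + a ≠ z := fun h => ha0 (by rwa [add_eq_left] at h)
      have hzaw : z + a ≠ w := fun h => hazw (by
        have h2 := congrArg (fun v => z + v) h
        simpa [← add_assoc, add_self_char2] using h2)
      have hwa : w + a ≠ w := fun h => ha0 (by rwa [add_eq_left] at h)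
      have hwaz : w + a ≠ z := fun h => hazw (by
        have h2 := congrArg (fun v => w + v) h
        simp only [← add_assoc, add_self_char2, zero_add] at h2
        exact h2.trans (add_comm w z))
      rw [pmVec_other z w ε hza hzaw, pmVec_other z w ε hwaz hwa]
      simp
end PM


lemma zmod2_eq_iff_add_eq_zero : ∀ x y : ZMod 2, x = y ↔ x + y = 0 := by decide

lemma normSq_avg (Z W : ZMod 2) :
    Complex.normSq (((-1 : ℂ) ^ Z.val + (-1) ^ W.val) / 2) = if Z = W then 1 else 0 := by
  by_cases h : Z = W
  · subst h
    rw [if_pos rfl]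
    have : ((-1 : ℂ) ^ Z.val + (-1) ^ Z.val) / 2 = (-1) ^ Z.val := by ring
    rw [this, map_pow]
    simp
  · rw [if_neg h]
    have hc : Z = 0 ∧ W = 1 ∨ Z = 1 ∧ W = 0 := by revert h; revert Z W; decide
    rcases hc with ⟨h1, h2⟩ | ⟨h1, h2⟩ <;> subst h1 <;> subst h2 <;>
      simp [ZMod.val_one]

lemma isStabState_pmVec {n : ℕ} (z w : Fin n → ZMod 2) (ε : ℝ) (hzw : z ≠ w)
    (hε : ε = 1 ∨ ε = -1) : IsStabState (proj (pmVec z w ε)) := by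
  have hε2 : ε * ε = 1 := by rcases hε with h | h <;> subst h <;> norm_num
  have hsqR : Real.sqrt 2 * Real.sqrt 2 = 2 := Real.mul_self_sqrt (by norm_num)
  refine ⟨pmVec z w ε, ?_, rfl, ?_⟩
  · rw [← Finset.sum_subset (Finset.subset_univ ({z, w} : Finset (Fin n → ZMod 2)))
        (by
          intro y _ hy
          simp only [Finset.mem_insert, Finset.mem_singleton, not_or] at hy
          rw [pmVec_other z w ε hy.1 hy.2, map_zero])]
    rw [Finset.sum_pair hzw, pmVec_z z w ε hzw, pmVec_w z w ε hzw]
    rw [Complex.normSq_div, Complex.normSq_div]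
    simp only [Complex.normSq_one, Complex.normSq_ofReal, hε2, hsqR]
    norm_num
  · unfold IsStabVec
    have ha0 : z + w ≠ 0 := by
      intro h
      apply hzw
      funext i
      have h2 := congrFun h i
      have : ∀ x y : ZMod 2, x + y = 0 → x = y := by decide
      exact this _ _ h2
    have hset : {p : (Fin n → ZMod 2) × (Fin n → ZMod 2) |
        Complex.normSq ((pauli p.1 p.2 * proj (pmVec z w ε)).trace) = 1}
        = {p : (Fin n → ZMod 2) × (Fin n → ZMod 2) |
            (p.1 = 0 ∨ p.1 = z + w) ∧ ∑ i, p.2 i * (z + w) i = 0} := by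
      ext ⟨a, b⟩
      simp only [Set.mem_setOf_eq, Pi.add_apply]
      rw [trace_pauli_pmVec z w ε a b hzw hε]
      have hZW : (∑ i, b i * z i) + (∑ i, b i * w i) = ∑ i, b i * (z i + w i) := by
        rw [← Finset.sum_add_distrib]
        refine Finset.sum_congr rfl fun i _ => ?_
        simp [mul_add]
      have hkey : ((∑ i, b i * z i : ZMod 2) = ∑ i, b i * w i) ↔ ∑ i, b i * (z i + w i) = 0 := by
        rw [zmod2_eq_iff_add_eq_zero, hZW]
      rw [neg_one_pow_sum_val (fun i => b i * z i), neg_one_pow_sum_val (fun i => b i * w i)]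
      by_cases ha : a = 0
      · rw [if_pos ha]
        rw [normSq_avg]
        subst ha
        by_cases h : (∑ i, b i * z i : ZMod 2) = ∑ i, b i * w i
        · simp [h, hkey.mp h]
        · simp [h, (not_iff_not.mpr hkey).mp h]
      · rw [if_neg ha]
        by_cases ha2 : a = z + w
        · rw [if_pos ha2]
          rw [map_mul, map_mul, map_pow]
          simp only [Complex.normSq_I, one_pow, one_mul, Complex.normSq_ofReal, hε2]
          rw [normSq_avg]
          by_cases h : (∑ i, b i * z i : ZMod 2) = ∑ i, b i * w i
          · simp [h, ha, ha2, hkey.mp h]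
          · simp [h, ha, ha2, (not_iff_not.mpr hkey).mp h]
        · rw [if_neg ha2]
          simp [ha, ha2]
    rw [hset]
    exact ncard_pairset (z + w) ha0

lemma proj_eVec_apply {n : ℕ} (z a b : Fin n → ZMod 2) :
    proj (eVec z) a b = (if a = z then (1:ℂ) else 0) * (if b = z then (1:ℂ) else 0) := by
  simp only [proj, eVec, Matrix.of_apply]
  congr 1
  by_cases h : b = z <;> simp [h]

lemma pmVec_split {n : ℕ} {z w : Fin n → ZMod 2} (hzw : z ≠ w) (ε : ℝ) (a : Fin n → ZMod 2) :
    pmVec z w ε a = ((if a = z then (1:ℂ) else 0) + (ε : ℂ) * (if a = w then (1:ℂ) else 0))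
      / (Real.sqrt 2 : ℂ) := by
  simp only [pmVec]
  congr 1
  by_cases h1 : a = z
  · subst h1
    simp [hzw]
  · by_cases h2 : a = w <;> simp [h1, h2, Ne.symm hzw]

lemma proj_pmVec_apply {n : ℕ} {z w : Fin n → ZMod 2} (hzw : z ≠ w) (ε : ℝ)
    (a b : Fin n → ZMod 2) :
    proj (pmVec z w ε) a b =
      ((if a = z then (1:ℂ) else 0) + (ε : ℂ) * (if a = w then (1:ℂ) else 0)) *
      ((if b = z then (1:ℂ) else 0) + (ε : ℂ) * (if b = w then (1:ℂ) else 0)) / 2 := by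
  have hsq : (Real.sqrt 2 : ℂ) * (Real.sqrt 2 : ℂ) = 2 := by
    rw [← Complex.ofReal_mul, Real.mul_self_sqrt (by norm_num : (0:ℝ) ≤ 2)]
    norm_num
  have hs2 : (Real.sqrt 2 : ℂ) ≠ 0 := by
    intro h
    rw [h] at hsq
    simp at hsq
  simp only [proj, Matrix.of_apply, pmVec_split hzw]
  rw [map_div₀]
  have hconj : conj ((if b = z then (1:ℂ) else 0) + (ε : ℂ) * (if b = w then (1:ℂ) else 0))
      = (if b = z then (1:ℂ) else 0) + (ε : ℂ) * (if b = w then (1:ℂ) else 0) := by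
    rw [map_add, map_mul, Complex.conj_ofReal]
    congr 1
    · by_cases h : b = z <;> simp [h]
    · congr 1
      by_cases h : b = w <;> simp [h]
  rw [hconj, Complex.conj_ofReal]
  rw [div_mul_div_comm, hsq]

lemma combo {n : ℕ} (f : (Fin n → ZMod 2) → ZMod 2) (K : ℝ) (x y a b : Fin n → ZMod 2) :
    (((if x = y then (1:ℝ) else (-1:ℝ)^((f x).val+(f y).val)) / K : ℝ) : ℂ) *
      (if x = y then proj (eVec x) else proj (pmVec x y 1)) a b
    + (((if x = y then (1:ℝ) else -(-1:ℝ)^((f x).val+(f y).val)) / K : ℝ) : ℂ) *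
      (if x = y then proj (eVec x) else proj (pmVec x y (-1))) a b
    = (-1:ℂ)^((f x).val+(f y).val) / (K : ℂ) *
        ((if a = x then (1:ℂ) else 0) * (if b = y then (1:ℂ) else 0)
          + (if a = y then (1:ℂ) else 0) * (if b = x then (1:ℂ) else 0)) := by
  by_cases hxy : x = y
  · subst hxy
    simp only [eq_self_iff_true, if_true]
    rw [proj_eVec_apply]
    have h1 : (-1:ℂ)^((f x).val+(f x).val) = 1 := by
      rw [← two_mul, pow_mul]
      norm_num
    rw [h1]
    push_cast
    ring
  · simp only [if_neg hxy]
    rw [proj_pmVec_apply hxy 1, proj_pmVec_apply hxy (-1)]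
    push_cast
    ring

lemma key_sum {n : ℕ} (S : Finset (Fin n → ZMod 2)) (f : (Fin n → ZMod 2) → ZMod 2)
    (v : Fin n → ZMod 2) :
    ∑ x ∈ S, (-1:ℂ)^((f x).val) * (if v = x then 1 else 0)
      = if v ∈ S then (-1:ℂ)^((f v).val) else 0 := by
  rw [← Finset.sum_ite_eq S v (fun x => (-1:ℂ)^((f x).val))]
  refine Finset.sum_congr rfl fun x _ => ?_
  by_cases h : v = x <;> simp [h]

lemma double_sum {n : ℕ} (S : Finset (Fin n → ZMod 2)) (f : (Fin n → ZMod 2) → ZMod 2)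
    (K : ℝ) (a b : Fin n → ZMod 2) :
    ∑ x ∈ S, ∑ y ∈ S, ((-1:ℂ)^((f x).val+(f y).val) / (K:ℂ) *
        ((if a = x then (1:ℂ) else 0) * (if b = y then (1:ℂ) else 0)
          + (if a = y then (1:ℂ) else 0) * (if b = x then (1:ℂ) else 0)))
    = (if a ∈ S then (-1:ℂ)^((f a).val) else 0) * (if b ∈ S then (-1:ℂ)^((f b).val) else 0)
        * 2 / (K:ℂ) := by
  have step : ∀ x y : Fin n → ZMod 2,
      (-1:ℂ)^((f x).val+(f y).val) / (K:ℂ) *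
        ((if a = x then (1:ℂ) else 0) * (if b = y then (1:ℂ) else 0)
          + (if a = y then (1:ℂ) else 0) * (if b = x then (1:ℂ) else 0))
      = (((-1:ℂ)^((f x).val) * (if a = x then (1:ℂ) else 0)) *
            ((-1:ℂ)^((f y).val) * (if b = y then (1:ℂ) else 0))
          + ((-1:ℂ)^((f y).val) * (if a = y then (1:ℂ) else 0)) *
            ((-1:ℂ)^((f x).val) * (if b = x then (1:ℂ) else 0))) / (K:ℂ) := by
    intro x y
    rw [pow_add]
    ring
  simp only [step]
  simp only [← Finset.sum_div]
  simp only [Finset.sum_add_distrib]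
  rw [← Finset.sum_mul_sum]
  have swap : ∑ x ∈ S, ∑ y ∈ S,
      ((-1:ℂ)^((f y).val) * (if a = y then (1:ℂ) else 0)) *
        ((-1:ℂ)^((f x).val) * (if b = x then (1:ℂ) else 0))
      = (∑ y ∈ S, (-1:ℂ)^((f y).val) * (if a = y then (1:ℂ) else 0)) *
        (∑ x ∈ S, (-1:ℂ)^((f x).val) * (if b = x then (1:ℂ) else 0)) := by
    rw [Finset.sum_comm, ← Finset.sum_mul_sum]
  rw [swap, key_sum, key_sum]
  ring

lemma psi_entry {n : ℕ} (S : Finset (Fin n → ZMod 2)) (hN0 : 0 < (S.card:ℝ))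
    (f : (Fin n → ZMod 2) → ZMod 2) (a b : Fin n → ZMod 2) :
    (if a ∈ S then (-1:ℂ)^((f a).val) else 0) * (if b ∈ S then (-1:ℂ)^((f b).val) else 0)
        * 2 / ((2 * S.card : ℝ):ℂ)
      = (if a ∈ S then (-1 : ℂ) ^ (f a).val / (Real.sqrt S.card : ℂ) else 0) *
          conj (if b ∈ S then (-1 : ℂ) ^ (f b).val / (Real.sqrt S.card : ℂ) else 0) := by
  have hsqN : (Real.sqrt S.card : ℂ) * (Real.sqrt S.card : ℂ) = ((S.card : ℝ) : ℂ) := by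
    rw [← Complex.ofReal_mul, Real.mul_self_sqrt (le_of_lt hN0)]
  have hNC : ((S.card : ℝ) : ℂ) ≠ 0 := by exact_mod_cast ne_of_gt hN0
  have hsN : (Real.sqrt S.card : ℂ) ≠ 0 := by
    intro h
    rw [h, mul_zero] at hsqN
    exact hNC hsqN.symm
  by_cases ha : a ∈ S <;> by_cases hb : b ∈ S <;>
    simp only [ha, hb, if_true, if_false, map_zero, mul_zero, zero_mul, map_div₀, map_pow,
      map_neg, map_one, Complex.conj_ofReal, zero_div]
  rw [div_mul_div_comm, hsqN]
  rw [Complex.ofReal_mul]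
  field_simp
  push_cast
  ring

lemma sum_abs_calc (N : ℕ) (h : 0 < (N:ℝ)) : ((N * N * 2 : ℕ):ℝ) * (1/(2*(N:ℝ))) = N := by
  push_cast
  field_simp

set_option maxHeartbeats 1000000 in
/-- robustness of magic upper bound for subset phase states: ψ_{f,S}
decomposes into pure stabilizer states with ℓ¹ coefficient norm at most |S|, hence
ℛ(ψ_{f,S}) ≤ log|S|. -/
theorem logRob_subset_phase_le {n : ℕ} (S : Finset (Fin n → ZMod 2)) (hS : 2 ≤ S.card)
    (f : (Fin n → ZMod 2) → ZMod 2) :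
    let ψ : (Fin n → ZMod 2) → ℂ :=
      fun x => if x ∈ S then (-1 : ℂ) ^ (f x).val / (Real.sqrt S.card : ℂ) else 0
    (∃ (m : ℕ) (c : Fin m → ℝ)
        (σ : Fin m → Matrix (Fin n → ZMod 2) (Fin n → ZMod 2) ℂ),
      (∀ i, IsStabState (σ i)) ∧ proj ψ = ∑ i, (c i : ℂ) • σ i ∧
        ∑ i, |c i| ≤ (S.card : ℝ)) ∧
    logRob (proj ψ) ≤ Real.logb 2 (S.card : ℝ) := by
  classical
  intro ψ
  have hN0 : (0:ℝ) < (S.card : ℝ) := by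
    have : 0 < S.card := lt_of_lt_of_le (by norm_num) hS
    exact_mod_cast this
  have hNC : ((S.card : ℝ) : ℂ) ≠ 0 := by
    exact_mod_cast ne_of_gt hN0
  -- coefficient and matrix families on raw data
  set co' : ((Fin n → ZMod 2) × (Fin n → ZMod 2)) → Bool → ℝ := fun p t =>
    (if p.1 = p.2 then (1:ℝ) else
      cond t ((-1:ℝ)^((f p.1).val+(f p.2).val)) (-(-1:ℝ)^((f p.1).val+(f p.2).val)))
      / (2 * S.card) with hco'
  set mA' : ((Fin n → ZMod 2) × (Fin n → ZMod 2)) → Bool →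
      Matrix (Fin n → ZMod 2) (Fin n → ZMod 2) ℂ := fun p t =>
    if p.1 = p.2 then proj (eVec p.1) else proj (pmVec p.1 p.2 (cond t 1 (-1))) with hmA'
  set ι := ({p : (Fin n → ZMod 2) × (Fin n → ZMod 2) // p ∈ S ×ˢ S} × Bool) with hι
  obtain ⟨m, ⟨e⟩⟩ : ∃ m : ℕ, Nonempty (ι ≃ Fin m) := ⟨Fintype.card ι, ⟨Fintype.equivFin ι⟩⟩
  set c : Fin m → ℝ := fun i => co' (e.symm i).1.1 (e.symm i).2 with hc
  set σ : Fin m → Matrix (Fin n → ZMod 2) (Fin n → ZMod 2) ℂ :=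
    fun i => mA' (e.symm i).1.1 (e.symm i).2 with hσ
  -- stabilizer states
  have hstab : ∀ i, IsStabState (σ i) := by
    intro i
    rw [hσ, hmA']
    by_cases h : (e.symm i).1.1.1 = (e.symm i).1.1.2
    · simp only [if_pos h]
      exact isStabState_eVec _
    · simp only [if_neg h]
      refine isStabState_pmVec _ _ _ h ?_
      cases (e.symm i).2 <;> simp
  -- the decomposition
  have hdecomp : proj ψ = ∑ i, (c i : ℂ) • σ i := by
    have hre : ∑ i, (c i : ℂ) • σ i
        = ∑ q : ι, (co' q.1.1 q.2 : ℂ) • mA' q.1.1 q.2 :=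
      Equiv.sum_comp e.symm (fun q => (co' q.1.1 q.2 : ℂ) • mA' q.1.1 q.2)
    rw [hre, Fintype.sum_prod_type]
    simp only [Fintype.sum_bool]
    rw [Finset.sum_coe_sort (S ×ˢ S) (fun p =>
      (co' p true : ℂ) • mA' p true + (co' p false : ℂ) • mA' p false)]
    rw [Finset.sum_product]
    ext a b
    rw [Matrix.sum_apply]
    simp only [Matrix.sum_apply, Matrix.add_apply, Matrix.smul_apply, smul_eq_mul]
    have hterm : ∀ x y, (co' (x, y) true : ℂ) * mA' (x, y) true a b
        + (co' (x, y) false : ℂ) * mA' (x, y) false a b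
        = (-1:ℂ)^((f x).val+(f y).val) / ((2 * S.card : ℝ):ℂ) *
          ((if a = x then (1:ℂ) else 0) * (if b = y then (1:ℂ) else 0)
            + (if a = y then (1:ℂ) else 0) * (if b = x then (1:ℂ) else 0)) := by
      intro x y
      have := combo f (2 * S.card) x y a b
      simpa [hco', hmA', cond] using this
    simp only [hterm]
    rw [double_sum]
    exact (psi_entry S hN0 f a b).symm
  -- the ℓ¹ norm
  have habs : ∀ q : ι, |co' q.1.1 q.2| = 1 / (2 * (S.card : ℝ)) := by
    intro q
    rw [hco', abs_div]
    have h2 : |2 * (S.card : ℝ)| = 2 * S.card := abs_of_pos (by positivity)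
    rw [h2]
    congr 1
    by_cases h : q.1.1.1 = q.1.1.2
    · simp [h]
    · rw [if_neg h]
      cases q.2 <;> simp [abs_pow]
  have hcardι : Fintype.card ι = S.card * S.card * 2 := by
    show Fintype.card ({p : (Fin n → ZMod 2) × (Fin n → ZMod 2) // p ∈ S ×ˢ S} × Bool) = _
    rw [Fintype.card_prod, Fintype.card_coe, Finset.card_product, Fintype.card_bool]
  have hsum : ∑ i, |c i| = (S.card : ℝ) := by
    have hre : ∑ i, |c i| = ∑ q : ι, |co' q.1.1 q.2| :=
      Equiv.sum_comp e.symm (fun q => |co' q.1.1 q.2|)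
    rw [hre, Finset.sum_congr rfl (fun q _ => habs q), Finset.sum_const, Finset.card_univ,
      hcardι, nsmul_eq_mul]
    exact sum_abs_calc S.card hN0
  refine ⟨⟨m, c, σ, hstab, hdecomp, le_of_eq hsum⟩, ?_⟩
  -- logRob bound
  unfold logRob
  set T := {t : ℝ | ∃ (m' : ℕ) (c' : Fin m' → ℝ)
    (σ' : Fin m' → Matrix (Fin n → ZMod 2) (Fin n → ZMod 2) ℂ),
      (∀ i, IsStabState (σ' i)) ∧ proj ψ = ∑ i, (c' i : ℂ) • σ' i ∧ t = ∑ i, |c' i|} with hT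
  have hmem : (S.card : ℝ) ∈ T := ⟨m, c, σ, hstab, hdecomp, hsum.symm⟩
  have hnonneg : ∀ t ∈ T, (0:ℝ) ≤ t := by
    rintro t ⟨m', c', σ', -, -, rfl⟩
    positivity
  have hbdd : BddBelow T := ⟨0, hnonneg⟩
  have hle : sInf T ≤ (S.card : ℝ) := csInf_le hbdd hmem
  have hInf0 : 0 ≤ sInf T := le_csInf ⟨_, hmem⟩ hnonneg
  rcases eq_or_lt_of_le hInf0 with h0 | h0
  · rw [← h0, Real.logb_zero]
    exact Real.logb_nonneg one_lt_two (by exact_mod_cast le_trans (by norm_num) hS)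
  · exact Real.logb_le_logb_of_le one_lt_two h0 hle
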